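/- Let f₁,…,f_m be nonzero linear functionals on ℂⁿ spanning (ℂⁿ)^*, and let p ∈ ℝᵐ with p_i ≥ 0 for all i and Σ_{i=1}^m p_i = n. Then the following are equivalent: (i) for every subspace U ≤ ℂⁿ, dim U ≤ Σ_{i : U ⊄ ker f_i} p_i (equivalently, dim U ≤ Σ_{i=1}^m p_i·dim f_i(U)); (ii) p lies in the convex hull of the characteristic vectors χ_B ∈ {0,1}ᵐ of subsets B ⊆ {1,…,m} such that (f_i)_{i∈B} is a basis of (ℂⁿ)^*. In other words, the Brascamp–Lieb polytope associated with the rank-one datum (f₁,…,f_m) equals the base polytope of the linear matroid generated by (f₁,…,f_m). -/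

import Mathlib

open scoped Classical

open Module Submodule

namespace BLaux

variable {n m : ℕ} (f : Fin m → ((Fin n → ℂ) →ₗ[ℂ] ℂ))

noncomputable def rk (A : Finset (Fin m)) : ℕ :=
  finrank ℂ (span ℂ (f '' (A : Set (Fin m))))

lemma rk_mono {A B : Finset (Fin m)} (h : A ⊆ B) : rk f A ≤ rk f B :=
  Submodule.finrank_mono (span_mono (Set.image_mono (Finset.coe_subset.mpr h)))

lemma rk_le_card (A : Finset (Fin m)) : rk f A ≤ A.card := by
  have h2 := finrank_range_le_card (R := ℂ) (fun i : (A : Set (Fin m)) => f i)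
  rw [rk, Set.image_eq_range]
  simpa [Set.finrank] using h2

lemma rk_submodular (A B : Finset (Fin m)) :
    rk f (A ∪ B) + rk f (A ∩ B) ≤ rk f A + rk f B := by
  have h1 : span ℂ (f '' ((A ∪ B : Finset (Fin m)) : Set (Fin m)))
      = span ℂ (f '' ↑A) ⊔ span ℂ (f '' ↑B) := by
    rw [Finset.coe_union, Set.image_union, span_union]
  have h2 : span ℂ (f '' ((A ∩ B : Finset (Fin m)) : Set (Fin m)))
      ≤ span ℂ (f '' ↑A) ⊓ span ℂ (f '' ↑B) := by
    rw [le_inf_iff]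
    exact ⟨span_mono (Set.image_mono (by simp [Finset.coe_inter])),
      span_mono (Set.image_mono (by simp [Finset.coe_inter]))⟩
  have := finrank_sup_add_finrank_inf_eq (span ℂ (f '' (A : Set (Fin m)))) (span ℂ (f '' (B : Set (Fin m))))
  calc rk f (A ∪ B) + rk f (A ∩ B)
      ≤ finrank ℂ ↥(span ℂ (f '' ↑A) ⊔ span ℂ (f '' ↑B))
        + finrank ℂ ↥(span ℂ (f '' ↑A) ⊓ span ℂ (f '' ↑B)) := by
        exact add_le_add (le_of_eq (by rw [rk, h1])) (Submodule.finrank_mono h2)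
    _ = rk f A + rk f B := this

lemma coann_eq (A : Finset (Fin m)) :
    (span ℂ (f '' (A : Set (Fin m)))).dualCoannihilator = ⨅ i ∈ A, LinearMap.ker (f i) := by
  have h := Submodule.coe_dualCoannihilator_span (R := ℂ) (M := Fin n → ℂ) (f '' (A : Set (Fin m)))
  ext v
  have hv : v ∈ (span ℂ (f '' (A : Set (Fin m)))).dualCoannihilator ↔ ∀ g ∈ f '' (A : Set (Fin m)), g v = 0 := by
    constructor
    · intro h2 g hg
      have : v ∈ ((span ℂ (f '' (A : Set (Fin m)))).dualCoannihilator : Set (Fin n → ℂ)) := h2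
      rw [h] at this
      exact this g hg
    · intro h2
      show v ∈ ((span ℂ (f '' (A : Set (Fin m)))).dualCoannihilator : Set (Fin n → ℂ))
      rw [h]; exact h2
  rw [hv]
  simp [Submodule.mem_iInf, LinearMap.mem_ker]

lemma rk_add_ker (A : Finset (Fin m)) :
    rk f A + finrank ℂ ↥(⨅ i ∈ A, LinearMap.ker (f i)) = n := by
  have h := Subspace.finrank_add_finrank_dualCoannihilator_eq (span ℂ (f '' (A : Set (Fin m))))
  rw [coann_eq] at h
  simpa [rk] using h

lemma rk_univ (hfspan : Submodule.span ℂ (Set.range f) = ⊤) : rk f (Finset.univ) = n := by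
  rw [rk]
  rw [show f '' ((Finset.univ : Finset (Fin m)) : Set (Fin m)) = Set.range f by simp]
  rw [hfspan, finrank_top, Subspace.dual_finrank_eq]
  exact Module.finrank_fin_fun ℂ

lemma rk_singleton (hf0 : ∀ i, f i ≠ 0) (i : Fin m) : rk f {i} = 1 := by
  have h : f '' (({i} : Finset (Fin m)) : Set (Fin m)) = {f i} := by simp
  rw [rk, h]
  exact finrank_span_singleton (hf0 i)


def KSet : Set (Fin m → ℝ) := {x : Fin m → ℝ | ∃ B : Finset (Fin m),
    LinearIndependent ℂ (fun k : (B : Finset (Fin m)) => f k.1) ∧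
    Submodule.span ℂ (f '' (B : Set (Fin m))) = ⊤ ∧
    x = fun i => if i ∈ B then (1 : ℝ) else 0}

def PSet (n : ℕ) (f : Fin m → ((Fin n → ℂ) →ₗ[ℂ] ℂ)) : Set (Fin m → ℝ) :=
  {x : Fin m → ℝ | (∀ i, 0 ≤ x i) ∧ (∑ i, x i) = (n : ℝ) ∧
    ∀ A : Finset (Fin m), (∑ i ∈ A, x i) ≤ (rk f A : ℝ)}

lemma chi_sum (B : Finset (Fin m)) (A : Finset (Fin m)) :
    (∑ i ∈ A, if i ∈ B then (1 : ℝ) else 0) = ((A ∩ B).card : ℝ) := by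
  rw [Finset.sum_ite_mem]
  simp

lemma rk_inter_card {B : Finset (Fin m)}
    (hind : LinearIndependent ℂ (fun k : (B : Finset (Fin m)) => f k.1))
    (A : Finset (Fin m)) : rk f (A ∩ B) = (A ∩ B).card := by
  have hsub : A ∩ B ⊆ B := Finset.inter_subset_right
  let ι : (A ∩ B : Finset (Fin m)) → (B : Finset (Fin m)) :=
    fun k => ⟨k.1, hsub k.2⟩
  have hinj : Function.Injective ι := by
    intro a b hab
    have : (ι a).1 = (ι b).1 := by rw [hab]
    exact Subtype.ext this
  have hind2 : LinearIndependent ℂ (fun k : (A ∩ B : Finset (Fin m)) => f k.1) :=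
    hind.comp ι hinj
  have := finrank_span_eq_card hind2
  rw [rk]
  rw [show f '' ((A ∩ B : Finset (Fin m)) : Set (Fin m))
      = Set.range (fun k : (A ∩ B : Finset (Fin m)) => f k.1) from (Set.image_eq_range _ _)]
  rw [this]
  exact Fintype.card_coe _

lemma rk_basis_card {B : Finset (Fin m)}
    (hind : LinearIndependent ℂ (fun k : (B : Finset (Fin m)) => f k.1)) :
    rk f B = B.card := by
  have := rk_inter_card f hind B
  rwa [Finset.inter_self] at this


lemma card_basis (hfspan : Submodule.span ℂ (Set.range f) = ⊤)
    {B : Finset (Fin m)}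
    (hind : LinearIndependent ℂ (fun k : (B : Finset (Fin m)) => f k.1))
    (hsp : Submodule.span ℂ (f '' (B : Set (Fin m))) = ⊤) : B.card = n := by
  have h1 : rk f B = B.card := rk_basis_card f hind
  have h2 : rk f B = rk f Finset.univ := by
    rw [rk, rk, hsp, show f '' ((Finset.univ : Finset (Fin m)) : Set (Fin m)) = Set.range f by simp, hfspan]
  rw [h1] at h2
  rw [h2, rk_univ f hfspan]

lemma K_sub_P (hfspan : Submodule.span ℂ (Set.range f) = ⊤) :
    KSet f ⊆ PSet n f := by
  rintro x ⟨B, hind, hsp, rfl⟩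
  refine ⟨fun i => by positivity, ?_, ?_⟩
  · rw [chi_sum, Finset.univ_inter, card_basis f hfspan hind hsp]
  · intro A
    rw [chi_sum]
    have h1 : rk f (A ∩ B) = (A ∩ B).card := rk_inter_card f hind A
    have h2 : rk f (A ∩ B) ≤ rk f A :=
      Submodule.finrank_mono (span_mono (Set.image_mono (Finset.coe_subset.mpr Finset.inter_subset_left)))
    exact_mod_cast h1 ▸ h2

lemma P_convex : Convex ℝ (PSet n f) := by
  rintro x ⟨hx0, hxs, hxr⟩ y ⟨hy0, hys, hyr⟩ a b ha hb hab
  refine ⟨fun i => by have := hx0 i; have := hy0 i; simp only [Pi.add_apply, Pi.smul_apply, smul_eq_mul]; positivity, ?_, ?_⟩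
  · simp only [Pi.add_apply, Pi.smul_apply, smul_eq_mul]
    rw [Finset.sum_add_distrib, ← Finset.mul_sum, ← Finset.mul_sum, hxs, hys]
    nlinarith [hab]
  · intro A
    simp only [Pi.add_apply, Pi.smul_apply, smul_eq_mul]
    rw [Finset.sum_add_distrib, ← Finset.mul_sum, ← Finset.mul_sum]
    calc a * ∑ i ∈ A, x i + b * ∑ i ∈ A, y i
        ≤ a * (rk f A : ℝ) + b * (rk f A : ℝ) := by
          apply add_le_add (mul_le_mul_of_nonneg_left (hxr A) ha) (mul_le_mul_of_nonneg_left (hyr A) hb)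
      _ = (rk f A : ℝ) := by rw [← add_mul, hab, one_mul]

lemma P_compact : IsCompact (PSet n f) := by
  have hsub : PSet n f ⊆ Set.Icc (fun _ => (0:ℝ)) (fun _ => (n:ℝ)) := by
    rintro x ⟨hx0, hxs, -⟩
    constructor
    · intro i; exact hx0 i
    · intro i
      calc x i ≤ ∑ j, x j := Finset.single_le_sum (fun j _ => hx0 j) (Finset.mem_univ i)
        _ = (n : ℝ) := hxs
  have hclosed : IsClosed (PSet n f) := by
    have h1 : IsClosed {x : Fin m → ℝ | ∀ i, 0 ≤ x i} := by
      have : {x : Fin m → ℝ | ∀ i, 0 ≤ x i} = ⋂ i, {x | 0 ≤ x i} :=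
        by ext x; simp
      rw [this]
      exact isClosed_iInter fun i => isClosed_le continuous_const (continuous_apply i)
    have h2 : IsClosed {x : Fin m → ℝ | (∑ i, x i) = (n:ℝ)} :=
      isClosed_eq (by continuity) continuous_const
    have h3 : IsClosed {x : Fin m → ℝ | ∀ A : Finset (Fin m), (∑ i ∈ A, x i) ≤ (rk f A : ℝ)} := by
      have : {x : Fin m → ℝ | ∀ A : Finset (Fin m), (∑ i ∈ A, x i) ≤ (rk f A : ℝ)}
          = ⋂ A : Finset (Fin m), {x | (∑ i ∈ A, x i) ≤ (rk f A : ℝ)} := by ext x; simp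
      rw [this]
      exact isClosed_iInter fun A => isClosed_le (by continuity) continuous_const
    have : PSet n f = _ ∩ (_ ∩ _) := rfl
    exact (h1.inter (h2.inter h3))
  exact (isCompact_Icc).of_isClosed_subset hclosed hsub

lemma K_finite : (KSet f).Finite := by
  apply Set.Finite.subset (Set.finite_range (fun B : Finset (Fin m) => fun i => if i ∈ B then (1:ℝ) else 0))
  rintro x ⟨B, -, -, rfl⟩
  exact ⟨B, rfl⟩



lemma not_extreme_of_perturb {x : Fin m → ℝ} (hxP : x ∈ PSet n f)
    {i j : Fin m} (hij : i ≠ j) (hxi : 0 < x i) (hxj : 0 < x j)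
    (hiff : ∀ A : Finset (Fin m), (∑ k ∈ A, x k) = (rk f A : ℝ) → (i ∈ A ↔ j ∈ A)) :
    x ∉ Set.extremePoints ℝ (PSet n f) := by
  obtain ⟨hx0, hxs, hxr⟩ := hxP
  intro hext
  obtain ⟨-, hxext⟩ := mem_extremePoints.mp hext
  set d : Fin m → ℝ := fun k => if k = j then 1 else if k = i then -1 else 0 with hd
  have hdk : ∀ k, d k = (if k = j then (1:ℝ) else 0) + (if k = i then (-1:ℝ) else 0) := by
    intro k
    by_cases h1 : k = j
    · subst h1
      have h2 : ¬ (k = i) := fun h => hij (h.symm)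
      simp [hd, h2]
    · by_cases h2 : k = i
      · subst h2; simp [hd, h1, hij]
      · simp [hd, h1, h2]
  have hdA : ∀ A : Finset (Fin m), (∑ k ∈ A, d k)
      = (if j ∈ A then (1:ℝ) else 0) + (if i ∈ A then (-1:ℝ) else 0) := by
    intro A
    rw [Finset.sum_congr rfl (fun k _ => hdk k), Finset.sum_add_distrib,
      Finset.sum_ite_eq' A j (fun _ => (1:ℝ)), Finset.sum_ite_eq' A i (fun _ => (-1:ℝ))]
  have hdbound : ∀ A : Finset (Fin m), |∑ k ∈ A, d k| ≤ 1 := by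
    intro A
    rw [hdA]
    split_ifs <;> norm_num
  -- slack
  set NT : Finset (Finset (Fin m)) :=
    Finset.univ.filter (fun A : Finset (Fin m) => (∑ k ∈ A, x k) ≠ (rk f A : ℝ)) with hNT
  set δ : ℝ := if h : NT.Nonempty then NT.inf' h (fun A => (rk f A : ℝ) - ∑ k ∈ A, x k) else 1
    with hδ
  have hδpos : 0 < δ := by
    rw [hδ]
    split_ifs with h
    · refine (Finset.lt_inf'_iff h).mpr ?_
      intro A hA
      have hA' : (∑ k ∈ A, x k) ≠ (rk f A : ℝ) := (Finset.mem_filter.mp hA).2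
      have := hxr A
      cases lt_or_eq_of_le this with
      | inl h2 => linarith
      | inr h2 => exact absurd h2 hA'
    · norm_num
  have hδle : ∀ A : Finset (Fin m), (∑ k ∈ A, x k) ≠ (rk f A : ℝ) →
      δ ≤ (rk f A : ℝ) - ∑ k ∈ A, x k := by
    intro A hA
    have hmem : A ∈ NT := Finset.mem_filter.mpr ⟨Finset.mem_univ A, hA⟩
    rw [hδ]
    rw [dif_pos ⟨A, hmem⟩]
    exact Finset.inf'_le _ hmem
  set ε : ℝ := min δ (min (x i) (x j)) with hε
  have hεpos : 0 < ε := lt_min hδpos (lt_min hxi hxj)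
  have hεδ : ε ≤ δ := min_le_left _ _
  have hεi : ε ≤ x i := le_trans (min_le_right _ _) (min_le_left _ _)
  have hεj : ε ≤ x j := le_trans (min_le_right _ _) (min_le_right _ _)
  -- the two perturbed points
  have hmem : ∀ s : ℝ, |s| = 1 → (fun k => x k + (s * ε) * d k) ∈ PSet n f := by
    intro s hs
    have hsabs : |s * ε| = ε := by
      rw [abs_mul, hs, one_mul, abs_of_pos hεpos]
    refine ⟨?_, ?_, ?_⟩
    · intro k
      show (0:ℝ) ≤ x k + (s * ε) * d k
      have habs : |(s * ε) * d k| ≤ ε := by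
        rw [abs_mul, hsabs]
        have hdk1 : |d k| ≤ 1 := by
          rw [hd]
          dsimp only
          split_ifs <;> norm_num
        calc ε * |d k| ≤ ε * 1 := mul_le_mul_of_nonneg_left hdk1 hεpos.le
          _ = ε := mul_one _
      have hge : -ε ≤ (s * ε) * d k := by
        have := neg_abs_le ((s * ε) * d k)
        linarith
      by_cases h1 : k = j
      · subst h1; linarith
      · by_cases h2 : k = i
        · subst h2; linarith
        · have hz : d k = 0 := by rw [hd]; simp [h1, h2]
          rw [hz, mul_zero, add_zero]
          exact hx0 k
    · rw [Finset.sum_add_distrib, hxs, ← Finset.mul_sum, hdA]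
      simp [hij.symm]
    · intro A
      rw [Finset.sum_add_distrib, ← Finset.mul_sum]
      by_cases hA : (∑ k ∈ A, x k) = (rk f A : ℝ)
      · have h0 : (∑ k ∈ A, d k) = 0 := by
          rw [hdA]
          rcases (hiff A hA) with ⟨h1, h2⟩
          by_cases hi : i ∈ A
          · simp [hi, h1 hi]
          · have hj : j ∉ A := fun hj => hi (h2 hj)
            simp [hi, hj]
        rw [h0, mul_zero, add_zero, hA]
      · have h1 : (s * ε) * (∑ k ∈ A, d k) ≤ ε := by
          calc (s * ε) * (∑ k ∈ A, d k) ≤ |(s * ε) * (∑ k ∈ A, d k)| := le_abs_self _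
            _ = ε * |∑ k ∈ A, d k| := by rw [abs_mul, hsabs]
            _ ≤ ε * 1 := mul_le_mul_of_nonneg_left (hdbound A) (le_of_lt hεpos)
            _ = ε := mul_one ε
        have h2 := hδle A hA
        have h3 := hxr A
        linarith
  have hy := hmem 1 (by norm_num)
  have hz := hmem (-1) (by norm_num)
  have hseg : x ∈ openSegment ℝ (fun k => x k + (1 * ε) * d k) (fun k => x k + ((-1) * ε) * d k) := by
    refine ⟨1/2, 1/2, by norm_num, by norm_num, by norm_num, ?_⟩
    funext k
    simp only [Pi.add_apply, Pi.smul_apply, smul_eq_mul]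
    ring
  obtain ⟨hy1, -⟩ := hxext _ hy _ hz hseg
  have hcf := congrFun hy1 j
  have hdj : d j = 1 := by rw [hd]; simp
  rw [hdj] at hcf
  have : x j + 1 * ε * 1 = x j := hcf
  linarith


lemma rk_empty : rk f (∅ : Finset (Fin m)) = 0 := by
  rw [rk]; simp

lemma extreme_sub_K (hf0 : ∀ i, f i ≠ 0) (hfspan : Submodule.span ℂ (Set.range f) = ⊤) :
    Set.extremePoints ℝ (PSet n f) ⊆ KSet f := by
  intro x hx
  obtain ⟨hx0, hxs, hxr⟩ := hx.1
  set T : Finset (Finset (Fin m)) :=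
    Finset.univ.filter (fun A : Finset (Fin m) => (∑ k ∈ A, x k) = (rk f A : ℝ)) with hT
  have memT : ∀ A : Finset (Fin m), A ∈ T ↔ (∑ k ∈ A, x k) = (rk f A : ℝ) := by
    intro A; rw [hT, Finset.mem_filter]; simp
  have huniv : Finset.univ ∈ T := (memT _).mpr (by rw [rk_univ f hfspan]; exact hxs)
  have hempty : (∅ : Finset (Fin m)) ∈ T := (memT _).mpr (by simp [rk_empty])
  have hclose : ∀ A ∈ T, ∀ B ∈ T, A ∪ B ∈ T ∧ A ∩ B ∈ T := by
    intro A hA B hB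
    rw [memT] at hA hB
    have h1 : (∑ k ∈ A ∪ B, x k) + (∑ k ∈ A ∩ B, x k) = (∑ k ∈ A, x k) + (∑ k ∈ B, x k) :=
      Finset.sum_union_inter
    have h2 := rk_submodular f A B
    have h3 := hxr (A ∪ B)
    have h4 := hxr (A ∩ B)
    have h2' : ((rk f (A ∪ B) : ℝ) + rk f (A ∩ B)) ≤ (rk f A : ℝ) + rk f B := by
      exact_mod_cast h2
    exact ⟨(memT _).mpr (by linarith), (memT _).mpr (by linarith)⟩
  have hinfT : ∀ S : Finset (Finset (Fin m)), (∀ A ∈ S, A ∈ T) → S.inf id ∈ T := by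
    intro S
    induction S using Finset.cons_induction with
    | empty => intro _; rw [Finset.inf_empty, Finset.top_eq_univ]; exact huniv
    | cons a S ha ih =>
      intro hmem
      rw [Finset.inf_cons]
      have h1 : a ∈ T := hmem a (Finset.mem_cons_self a S)
      have h2 : S.inf id ∈ T := ih (fun A hA => hmem A (Finset.mem_cons_of_mem hA))
      have := (hclose a h1 (S.inf id) h2).2
      simpa [Finset.inf_eq_inter] using this
  have hsupT : ∀ S : Finset (Finset (Fin m)), (∀ A ∈ S, A ∈ T) → S.sup id ∈ T := by
    intro S
    induction S using Finset.cons_induction with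
    | empty => intro _; rw [Finset.sup_empty]; exact hempty
    | cons a S ha ih =>
      intro hmem
      rw [Finset.sup_cons]
      have h1 : a ∈ T := hmem a (Finset.mem_cons_self a S)
      have h2 : S.sup id ∈ T := ih (fun A hA => hmem A (Finset.mem_cons_of_mem hA))
      have := (hclose a h1 (S.sup id) h2).1
      simpa [Finset.sup_eq_union] using this
  have meminf : ∀ (S : Finset (Finset (Fin m))) (a : Fin m), a ∈ S.inf id ↔ ∀ A ∈ S, a ∈ A := by
    intro S a
    induction S using Finset.cons_induction with
    | empty => simp [Finset.inf_empty, Finset.top_eq_univ]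
    | cons b S hb ih => simp [Finset.inf_cons, Finset.inf_eq_inter, Finset.mem_inter, ih]
  have key : ∀ j : Fin m, x j = 0 ∨ x j = 1 := by
    intro j
    by_contra hj
    push_neg at hj
    obtain ⟨hj0, hj1⟩ := hj
    have hxj : 0 < x j := lt_of_le_of_ne (hx0 j) (Ne.symm hj0)
    set C : Finset (Fin m) := ((T.filter (fun A => j ∈ A)).inf id) with hC
    set D : Finset (Fin m) := ((T.filter (fun A => j ∉ A)).sup id) with hD
    have hCT : C ∈ T := hinfT _ (fun A hA => (Finset.mem_filter.mp hA).1)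
    have hDT : D ∈ T := hsupT _ (fun A hA => (Finset.mem_filter.mp hA).1)
    have hjC : j ∈ C := (meminf _ j).mpr (fun A hA => (Finset.mem_filter.mp hA).2)
    have hjD : j ∉ D := by
      intro hmem
      rw [hD, Finset.mem_sup] at hmem
      obtain ⟨A, hA, hjA⟩ := hmem
      exact (Finset.mem_filter.mp hA).2 hjA
    have hCmin : ∀ A ∈ T, j ∈ A → C ⊆ A := by
      intro A hA hjA
      exact Finset.inf_le (f := id) (Finset.mem_filter.mpr ⟨hA, hjA⟩)
    have hDmax : ∀ A ∈ T, j ∉ A → A ⊆ D := fun A hA hjA =>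
      Finset.le_sup (f := id) (Finset.mem_filter.mpr ⟨hA, hjA⟩)
    have hclassT : ∀ i, i ∈ C → i ∉ D → ∀ A ∈ T, (i ∈ A ↔ j ∈ A) := by
      intro i hiC hiD A hA
      constructor
      · intro hiA
        by_contra hjA
        exact hiD (hDmax A hA hjA hiA)
      · intro hjA
        exact hCmin A hA hjA hiC
    by_cases hcase : ∃ i, i ∈ C ∧ i ∉ D ∧ i ≠ j ∧ x i ≠ 0
    · obtain ⟨i, hiC, hiD, hij, hxi⟩ := hcase
      have hxi' : 0 < x i := lt_of_le_of_ne (hx0 i) (Ne.symm hxi)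
      exact not_extreme_of_perturb f ⟨hx0, hxs, hxr⟩ hij hxi' hxj
        (fun A hA => hclassT i hiC hiD A ((memT A).mpr hA)) hx
    · push_neg at hcase
      have hxj1 : x j < 1 := by
        have h := hxr {j}
        rw [Finset.sum_singleton, rk_singleton f hf0 j] at h
        exact lt_of_le_of_ne (by exact_mod_cast h) hj1
      have hCD : C ∩ D ⊆ C := Finset.inter_subset_left
      have hCDT : C ∩ D ∈ T := (hclose C hCT D hDT).2
      have hsum : (∑ k ∈ C \ D, x k) = (rk f C : ℝ) - rk f (C ∩ D) := by
        rw [← Finset.sdiff_inter_self_left C D, Finset.sum_sdiff_eq_sub hCD,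
          (memT C).mp hCT, (memT _).mp hCDT]
      have hxsum : (∑ k ∈ C \ D, x k) = x j := by
        apply Finset.sum_eq_single_of_mem j (Finset.mem_sdiff.mpr ⟨hjC, hjD⟩)
        intro b hb hbj
        exact hcase b (Finset.mem_sdiff.mp hb).1 (Finset.mem_sdiff.mp hb).2 hbj
      rw [hxsum] at hsum
      have hle : rk f (C ∩ D) ≤ rk f C := rk_mono f Finset.inter_subset_left
      have h1 : (rk f (C ∩ D) : ℝ) < rk f C := by linarith
      have h2 : rk f (C ∩ D) < rk f C := by exact_mod_cast h1
      have h3 : (rk f (C ∩ D) : ℝ) + 1 ≤ (rk f C : ℝ) := by exact_mod_cast h2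
      linarith
  set B : Finset (Fin m) := Finset.univ.filter (fun k => x k = 1) with hB
  have hxB : x = fun i => if i ∈ B then (1 : ℝ) else 0 := by
    funext k
    rcases key k with h0 | h1
    · simp [hB, Finset.mem_filter, h0]
    · simp [hB, Finset.mem_filter, h1]
  have hcard : (B.card : ℝ) = (n : ℝ) := by
    rw [← hxs, hxB, chi_sum, Finset.univ_inter]
  have hcardn : B.card = n := by exact_mod_cast hcard
  have hrkB : rk f B = B.card := by
    have h1 := rk_le_card f B
    have h2 := hxr B
    rw [hxB, chi_sum] at h2
    have h3 : B ∩ B = B := Finset.inter_self B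
    rw [h3] at h2
    have h2' : B.card ≤ rk f B := by exact_mod_cast h2
    omega
  have hfinr : finrank ℂ ↥(span ℂ (f '' (B : Set (Fin m)))) = n := by
    rw [← rk, hrkB, hcardn]
  have hind : LinearIndependent ℂ (fun k : (B : Finset (Fin m)) => f k.1) := by
    rw [linearIndependent_iff_card_eq_finrank_span]
    rw [show Set.range (fun k : (B : Finset (Fin m)) => f k.1) = f '' (B : Set (Fin m)) from
      (Set.image_eq_range _ _).symm]
    rw [Set.finrank]
    rw [← rk, hrkB]
    exact (Fintype.card_coe B).symm ▸ rfl
  have hsp : Submodule.span ℂ (f '' (B : Set (Fin m))) = ⊤ := by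
    apply Submodule.eq_top_of_finrank_eq
    rw [hfinr, Subspace.dual_finrank_eq]
    exact (Module.finrank_fin_fun ℂ).symm
  exact ⟨B, hind, hsp, hxB⟩

lemma P_sub_hull (hf0 : ∀ i, f i ≠ 0) (hfspan : Submodule.span ℂ (Set.range f) = ⊤) :
    PSet n f ⊆ convexHull ℝ (KSet f) := by
  intro x hxP
  have hKM := closure_convexHull_extremePoints (P_compact f) (P_convex f)
  have h1 : x ∈ closure (convexHull ℝ (Set.extremePoints ℝ (PSet n f))) := by
    rw [hKM]; exact hxP
  have h2 : closure (convexHull ℝ (Set.extremePoints ℝ (PSet n f)))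
      ⊆ closure (convexHull ℝ (KSet f)) :=
    closure_mono (convexHull_mono (extreme_sub_K f hf0 hfspan))
  have h3 : IsClosed (convexHull ℝ (KSet f)) := ((K_finite f).isCompact_convexHull ℝ).isClosed
  rw [h3.closure_eq] at h2
  exact h2 h1

lemma orig_to_finset (p : Fin m → ℝ) (hp : ∀ i, 0 ≤ p i) (hsum : (∑ i, p i) = (n : ℝ))
    (h : ∀ U : Submodule ℂ (Fin n → ℂ),
      (finrank ℂ U : ℝ) ≤ ∑ i : Fin m, if U ≤ LinearMap.ker (f i) then 0 else p i)
    (A : Finset (Fin m)) : (∑ i ∈ A, p i) ≤ (rk f A : ℝ) := by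
  set U : Submodule ℂ (Fin n → ℂ) := ⨅ i ∈ A, LinearMap.ker (f i) with hU
  have hdim : rk f A + finrank ℂ U = n := rk_add_ker f A
  have h1 := h U
  have h2 : (∑ i : Fin m, if U ≤ LinearMap.ker (f i) then 0 else p i)
      ≤ ∑ i : Fin m, if i ∈ A then 0 else p i := by
    apply Finset.sum_le_sum
    intro i _
    by_cases hiA : i ∈ A
    · rw [if_pos hiA]
      have hker : U ≤ LinearMap.ker (f i) := by
        rw [hU]
        exact iInf₂_le i hiA
      rw [if_pos hker]
    · rw [if_neg hiA]
      split_ifs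
      · exact hp i
      · exact le_refl _
  have h3 : (∑ i : Fin m, if i ∈ A then (0:ℝ) else p i) = (∑ i, p i) - ∑ i ∈ A, p i := by
    have e1 : (∑ i ∈ Finset.univ.filter (fun i => i ∈ A), p i) = ∑ i ∈ A, p i := by
      rw [Finset.filter_univ_mem]
    have e2 := Finset.sum_filter_add_sum_filter_not Finset.univ (fun i => i ∈ A) p
    have e3 : (∑ i ∈ Finset.univ.filter (fun i => ¬ i ∈ A), p i)
        = ∑ i : Fin m, if i ∈ A then (0:ℝ) else p i := by
      rw [Finset.sum_filter]
      apply Finset.sum_congr rfl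
      intro i _
      by_cases hiA : i ∈ A <;> simp [hiA]
    linarith
  have hdim' : (rk f A : ℝ) + (finrank ℂ U : ℝ) = (n : ℝ) := by exact_mod_cast hdim
  rw [h3, hsum] at h2
  linarith

lemma finset_to_orig (p : Fin m → ℝ) (hp : ∀ i, 0 ≤ p i) (hsum : (∑ i, p i) = (n : ℝ))
    (h : ∀ A : Finset (Fin m), (∑ i ∈ A, p i) ≤ (rk f A : ℝ))
    (U : Submodule ℂ (Fin n → ℂ)) :
    (finrank ℂ U : ℝ) ≤ ∑ i : Fin m, if U ≤ LinearMap.ker (f i) then 0 else p i := by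
  set A : Finset (Fin m) := Finset.univ.filter (fun i => ¬ U ≤ LinearMap.ker (f i)) with hA
  have hsum2 : (∑ i : Fin m, if U ≤ LinearMap.ker (f i) then 0 else p i) = ∑ i ∈ A, p i := by
    rw [hA, Finset.sum_filter]
    apply Finset.sum_congr rfl
    intro i _
    by_cases hiA : U ≤ LinearMap.ker (f i) <;> simp [hiA]
  have hUle : U ≤ ⨅ i ∈ Aᶜ, LinearMap.ker (f i) := by
    refine le_iInf fun i => le_iInf fun hi => ?_
    have h2 := Finset.mem_compl.mp hi
    rw [hA, Finset.mem_filter] at h2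
    push_neg at h2
    exact h2 (Finset.mem_univ i)
  have hd1 : finrank ℂ U ≤ finrank ℂ ↥(⨅ i ∈ Aᶜ, LinearMap.ker (f i)) :=
    Submodule.finrank_mono hUle
  have hdim := rk_add_ker f Aᶜ
  have hc := h Aᶜ
  have hsplit : (∑ i ∈ A, p i) + ∑ i ∈ Aᶜ, p i = ∑ i, p i := Finset.sum_add_sum_compl A p
  have hd1' : (finrank ℂ U : ℝ) ≤ (finrank ℂ ↥(⨅ i ∈ Aᶜ, LinearMap.ker (f i)) : ℝ) := by
    exact_mod_cast hd1
  have hdim' : (rk f Aᶜ : ℝ) + (finrank ℂ ↥(⨅ i ∈ Aᶜ, LinearMap.ker (f i)) : ℝ) = (n : ℝ) := by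
    exact_mod_cast hdim
  rw [hsum2]
  linarith

end BLaux


/-- **Barthe's characterization of rank-one Brascamp–Lieb polytopes.** Let
`f₁,…,f_m` be nonzero functionals spanning `(ℂⁿ)^*` and `p ∈ ℝ₊ᵐ` with `Σ_i p_i = n`.
Then `dim U ≤ Σ_{i : U ⊄ ker f_i} p_i` for all subspaces `U ≤ ℂⁿ` iff `p` lies in the
convex hull of the characteristic vectors of subsets `B` for which `(f_i)_{i∈B}` is a
basis of `(ℂⁿ)^*`; i.e. the rank-one BL polytope is the base polytope of the linear
matroid generated by `(f₁,…,f_m)`. -/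
theorem rank_one_BL_polytope_eq_base_polytope
    (n m : ℕ)
    (f : Fin m → ((Fin n → ℂ) →ₗ[ℂ] ℂ))
    (hf0 : ∀ i, f i ≠ 0)
    (hfspan : Submodule.span ℂ (Set.range f) = ⊤)
    (p : Fin m → ℝ) (hp : ∀ i, 0 ≤ p i) (hsum : (∑ i, p i) = (n : ℝ)) :
    (∀ U : Submodule ℂ (Fin n → ℂ),
        (Module.finrank ℂ U : ℝ) ≤
          ∑ i : Fin m, if U ≤ LinearMap.ker (f i) then 0 else p i) ↔
      p ∈ convexHull ℝ {x : Fin m → ℝ | ∃ B : Finset (Fin m),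
        LinearIndependent ℂ (fun k : (B : Finset (Fin m)) => f k.1) ∧
        Submodule.span ℂ (f '' (B : Set (Fin m))) = ⊤ ∧
        x = fun i => if i ∈ B then (1 : ℝ) else 0} := by
  constructor
  · intro hU
    have hP : p ∈ BLaux.PSet n f :=
      ⟨hp, hsum, fun A => BLaux.orig_to_finset f p hp hsum hU A⟩
    exact BLaux.P_sub_hull f hf0 hfspan hP
  · intro hhull
    have hP : p ∈ BLaux.PSet n f :=
      convexHull_min (BLaux.K_sub_P f hfspan) (BLaux.P_convex f) hhull
    exact BLaux.finset_to_orig f p hp hsum hP.2.2
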